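/- There exists a continuous function h : [0,∞) → ℝ mapping every dyadic rational to a dyadic rational that has no polynomial modulus of continuity with respect to either the extension argument or the precision argument: (i) for every polynomial p with natural-number coefficients there exist k ∈ ℕ and x, y ∈ [0, 2^k] with |x − y| ≤ 2^{-p(k)} and |h(x) − h(y)| > 1; and (ii) for every polynomial q with natural-number coefficients there exist n ∈ ℕ and x, y ∈ [0, 1] with |x − y| ≤ 2^{-q(n)} and |h(x) − h(y)| > 2^{-n}. -/

import Mathlib

/-- A real number is a dyadic rational if it has the form `m / 2^n`. -/
def IsDyadic (x : ℝ) : Prop := ∃ (m : ℤ) (n : ℕ), x = (m : ℝ) / 2 ^ n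

namespace St9

lemma dy_zero : IsDyadic 0 := ⟨0, 0, by norm_num⟩

lemma dy_add {x y : ℝ} (hx : IsDyadic x) (hy : IsDyadic y) : IsDyadic (x + y) := by
  obtain ⟨a, m, rfl⟩ := hx; obtain ⟨b, n, rfl⟩ := hy
  refine ⟨a * 2 ^ n + b * 2 ^ m, m + n, ?_⟩
  have h1 : ((2:ℝ)) ^ m ≠ 0 := by positivity
  have h2 : ((2:ℝ)) ^ n ≠ 0 := by positivity
  field_simp
  push_cast
  ring_nf

lemma dy_neg {x : ℝ} (hx : IsDyadic x) : IsDyadic (-x) := by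
  obtain ⟨a, m, rfl⟩ := hx
  exact ⟨-a, m, by push_cast; ring⟩

lemma dy_sub {x y : ℝ} (hx : IsDyadic x) (hy : IsDyadic y) : IsDyadic (x - y) := by
  rw [sub_eq_add_neg]; exact dy_add hx (dy_neg hy)

lemma dy_mul {x y : ℝ} (hx : IsDyadic x) (hy : IsDyadic y) : IsDyadic (x * y) := by
  obtain ⟨a, m, rfl⟩ := hx; obtain ⟨b, n, rfl⟩ := hy
  refine ⟨a * b, m + n, ?_⟩
  have h1 : ((2:ℝ)) ^ m ≠ 0 := by positivity
  have h2 : ((2:ℝ)) ^ n ≠ 0 := by positivity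
  field_simp
  push_cast
  ring_nf

lemma dy_abs {x : ℝ} (hx : IsDyadic x) : IsDyadic |x| := by
  rcases abs_cases x with ⟨h, _⟩ | ⟨h, _⟩
  · rwa [h]
  · rw [h]; exact dy_neg hx

/-- triangular bump with amplitude `A`, slope `S`, center `c`. -/
noncomputable def tri (A S c : ℝ) : ℝ → ℝ := fun x => max 0 (A - S * |x - c|)

lemma tri_continuous (A S c : ℝ) : Continuous (tri A S c) := by
  unfold tri; fun_prop

lemma tri_nonneg (A S c x : ℝ) : 0 ≤ tri A S c x := le_max_left _ _

lemma tri_le (A S c x : ℝ) (hA : 0 ≤ A) (hS : 0 ≤ S) : tri A S c x ≤ A := by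
  have : 0 ≤ S * |x - c| := by positivity
  unfold tri
  rw [max_le_iff]
  constructor <;> linarith

lemma tri_center (A S c : ℝ) (hA : 0 ≤ A) : tri A S c c = A := by
  simp [tri, hA]

lemma tri_eq_zero {A S c x : ℝ} (h : A ≤ S * |x - c|) : tri A S c x = 0 :=
  max_eq_left (by linarith)

lemma tri_dyadic {A S c x : ℝ} (hA : IsDyadic A) (hS : IsDyadic S) (hc : IsDyadic c)
    (hx : IsDyadic x) : IsDyadic (tri A S c x) := by
  rcases le_total (A - S * |x - c|) 0 with h | h
  · rw [tri, max_eq_left h]; exact dy_zero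
  · rw [tri, max_eq_right h]
    exact dy_sub hA (dy_mul hS (dy_abs (dy_sub hx hc)))

end St9

namespace St9

/-- inner bumps (inside `[0,1]`) -/
noncomputable def f1 (j : ℕ) : ℝ → ℝ :=
  tri (2 / 2 ^ j) (2 / 2 ^ j * 2 ^ (2 ^ j + 2)) (3 / 2 ^ (j + 2))

/-- outer bumps (at `k + 3/2`) -/
noncomputable def f2 (k : ℕ) : ℝ → ℝ :=
  tri 2 (2 * 2 ^ (2 ^ k + 2)) ((k : ℝ) + 3 / 2)

noncomputable def h1 (x : ℝ) : ℝ := ∑' j, f1 j x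
noncomputable def h2 (x : ℝ) : ℝ := ∑ᶠ k, f2 k x
noncomputable def hfun (x : ℝ) : ℝ := h1 x + h2 x

lemma pow_le_pow_exp (j : ℕ) : (2:ℝ) ^ (j + 2) ≤ 2 ^ (2 ^ j + 2) := by
  apply pow_le_pow_right₀ one_le_two
  have := (Nat.lt_two_pow_self (n := j))
  omega

lemma f1_center (j : ℕ) : f1 j (3 / 2 ^ (j + 2)) = 2 / 2 ^ j :=
  tri_center _ _ _ (by positivity)

lemma f1_edge (j : ℕ) : f1 j (3 / 2 ^ (j + 2) + 1 / 2 ^ (2 ^ j + 2)) = 0 := by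
  apply tri_eq_zero
  have h : |(3:ℝ) / 2 ^ (j + 2) + 1 / 2 ^ (2 ^ j + 2) - 3 / 2 ^ (j + 2)| = 1 / 2 ^ (2 ^ j + 2) := by
    rw [show (3:ℝ) / 2 ^ (j + 2) + 1 / 2 ^ (2 ^ j + 2) - 3 / 2 ^ (j + 2)
        = 1 / 2 ^ (2 ^ j + 2) by ring]
    exact abs_of_nonneg (by positivity)
  rw [h]
  have hp : ((2:ℝ)) ^ (2 ^ j + 2) ≠ 0 := by positivity
  apply le_of_eq
  field_simp

lemma f1_eq_zero {j : ℕ} {x : ℝ} (h : x ≤ 1 / 2 ^ (j + 1) ∨ 1 / 2 ^ j ≤ x) : f1 j x = 0 := by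
  apply tri_eq_zero
  have hd : 1 / 2 ^ (j + 2) ≤ |x - 3 / 2 ^ (j + 2)| := by
    have e1 : (1:ℝ) / 2 ^ (j + 1) = 2 / 2 ^ (j + 2) := by
      rw [pow_succ]; ring
    have e2 : (1:ℝ) / 2 ^ j = 4 / 2 ^ (j + 2) := by
      rw [pow_succ, pow_succ]; ring
    have hsum : (1:ℝ) / 2 ^ (j + 2) + 2 / 2 ^ (j + 2) = 3 / 2 ^ (j + 2) := by ring
    have hsum2 : (4:ℝ) / 2 ^ (j + 2) - 3 / 2 ^ (j + 2) = 1 / 2 ^ (j + 2) := by ring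
    rcases h with h | h
    · rw [e1] at h
      exact le_abs.mpr (Or.inr (by linarith))
    · rw [e2] at h
      exact le_abs.mpr (Or.inl (by linarith))
  have hA : (0:ℝ) < 2 / 2 ^ j := by positivity
  calc (2:ℝ) / 2 ^ j = 2 / 2 ^ j * 2 ^ (j + 2) * (1 / 2 ^ (j + 2)) := by
        field_simp
    _ ≤ 2 / 2 ^ j * 2 ^ (2 ^ j + 2) * |x - 3 / 2 ^ (j + 2)| := by
        apply mul_le_mul
        · exact mul_le_mul_of_nonneg_left (pow_le_pow_exp j) (le_of_lt hA)
        · exact hd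
        · positivity
        · positivity

lemma f1_ne_zero {j : ℕ} {x : ℝ} (h : f1 j x ≠ 0) :
    1 / 2 ^ (j + 1) < x ∧ x < 1 / 2 ^ j := by
  constructor
  · by_contra hc; exact h (f1_eq_zero (Or.inl (le_of_not_gt hc)))
  · by_contra hc; exact h (f1_eq_zero (Or.inr (le_of_not_gt hc)))

lemma f1_nonneg (j : ℕ) (x : ℝ) : 0 ≤ f1 j x := tri_nonneg _ _ _ _

lemma f1_le (j : ℕ) (x : ℝ) : f1 j x ≤ 2 / 2 ^ j :=
  tri_le _ _ _ _ (by positivity) (by positivity)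

lemma f1_bound (j : ℕ) (x : ℝ) : ‖f1 j x‖ ≤ 2 * (1/2) ^ j := by
  rw [Real.norm_eq_abs, abs_of_nonneg (f1_nonneg j x)]
  calc f1 j x ≤ 2 / 2 ^ j := f1_le j x
    _ = 2 * (1/2)^j := by rw [div_pow, one_pow]; ring

lemma h1_continuous : Continuous h1 := by
  apply continuous_tsum (fun j => tri_continuous _ _ _)
    ((summable_geometric_two).mul_left 2)
  exact f1_bound

lemma h1_eval {j : ℕ} {x : ℝ} (h1x : 1 / 2 ^ (j + 1) ≤ x) (h2x : x ≤ 1 / 2 ^ j) :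
    h1 x = f1 j x := by
  apply tsum_eq_single
  intro b hb
  rcases lt_or_gt_of_ne hb with hlt | hgt
  · -- b < j : x ≤ 1/2^j ≤ 1/2^(b+1)
    apply f1_eq_zero (Or.inl _)
    refine le_trans h2x ?_
    apply one_div_le_one_div_of_le (by positivity)
    exact pow_le_pow_right₀ one_le_two (by omega)
  · -- b > j : 1/2^b ≤ 1/2^(j+1) ≤ x
    apply f1_eq_zero (Or.inr _)
    refine le_trans ?_ h1x
    apply one_div_le_one_div_of_le (by positivity)
    exact pow_le_pow_right₀ one_le_two (by omega)

lemma h1_zero {x : ℝ} (hx : 1 ≤ x) : h1 x = 0 := by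
  have : ∀ j : ℕ, f1 j x = 0 := by
    intro j
    apply f1_eq_zero (Or.inr _)
    refine le_trans ?_ hx
    rw [div_le_one (by positivity)]
    exact one_le_pow₀ one_le_two
  unfold h1
  simp [this]

lemma h1_dyadic {x : ℝ} (hx : IsDyadic x) : IsDyadic (h1 x) := by
  by_cases hz : ∀ j, f1 j x = 0
  · unfold h1; simp [hz]; exact dy_zero
  · push_neg at hz
    obtain ⟨j, hj⟩ := hz
    obtain ⟨hl, hr⟩ := f1_ne_zero hj
    have : h1 x = f1 j x := by
      apply tsum_eq_single
      intro b hb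
      rcases lt_or_gt_of_ne hb with hlt | hgt
      · apply f1_eq_zero (Or.inl _)
        refine le_trans (le_of_lt hr) ?_
        apply one_div_le_one_div_of_le (by positivity)
        exact pow_le_pow_right₀ one_le_two (by omega)
      · apply f1_eq_zero (Or.inr _)
        refine le_trans ?_ (le_of_lt hl)
        apply one_div_le_one_div_of_le (by positivity)
        exact pow_le_pow_right₀ one_le_two (by omega)
    rw [this]
    apply tri_dyadic _ _ _ hx
    · exact ⟨2, j, by push_cast; ring⟩
    · refine ⟨2 ^ (2 ^ j + 3), j, ?_⟩
      push_cast
      rw [pow_succ]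
      ring
    · exact ⟨3, j + 2, by push_cast; ring⟩

end St9

namespace St9

lemma quarter_le (k : ℕ) : (2:ℝ) ≤ 2 * 2 ^ (2 ^ k + 2) * (1/4) := by
  have h4 : (4:ℝ) ≤ 2 ^ (2 ^ k + 2) := by
    calc (4:ℝ) = 2 ^ 2 := by norm_num
      _ ≤ 2 ^ (2 ^ k + 2) := pow_le_pow_right₀ one_le_two (Nat.le_add_left 2 (2^k))
  linarith

lemma f2_center (k : ℕ) : f2 k ((k : ℝ) + 3 / 2) = 2 := tri_center _ _ _ (by norm_num)

lemma f2_edge (k : ℕ) : f2 k ((k : ℝ) + 3 / 2 + 1 / 2 ^ (2 ^ k + 2)) = 0 := by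
  apply tri_eq_zero
  rw [show (k : ℝ) + 3 / 2 + 1 / 2 ^ (2 ^ k + 2) - ((k : ℝ) + 3 / 2)
      = 1 / 2 ^ (2 ^ k + 2) by ring, abs_of_nonneg (by positivity)]
  have hp : ((2:ℝ)) ^ (2 ^ k + 2) ≠ 0 := by positivity
  apply le_of_eq
  field_simp

lemma f2_eq_zero {k : ℕ} {x : ℝ} (h : 1/4 ≤ |x - ((k : ℝ) + 3 / 2)|) : f2 k x = 0 := by
  apply tri_eq_zero
  calc (2:ℝ) ≤ 2 * 2 ^ (2 ^ k + 2) * (1/4) := quarter_le k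
    _ ≤ 2 * 2 ^ (2 ^ k + 2) * |x - ((k : ℝ) + 3 / 2)| := by
        apply mul_le_mul_of_nonneg_left h (by positivity)

lemma f2_ne_zero {k : ℕ} {x : ℝ} (h : f2 k x ≠ 0) : |x - ((k : ℝ) + 3 / 2)| < 1/4 := by
  by_contra hc
  exact h (f2_eq_zero (le_of_not_gt hc))

lemma f2_locallyFinite : LocallyFinite fun k => Function.support (f2 k) := by
  intro x
  refine ⟨Set.Ioo (x - 1) (x + 1), Ioo_mem_nhds (by linarith) (by linarith), ?_⟩
  apply Set.Finite.subset (Set.finite_Iic ⌈x⌉₊)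
  rintro k ⟨y, hy, hy2⟩
  have h1 : |y - ((k : ℝ) + 3 / 2)| < 1/4 := f2_ne_zero hy
  obtain ⟨hy3, hy4⟩ := hy2
  have h2 : (k : ℝ) ≤ x := by
    have := abs_lt.mp h1
    simp only [Set.mem_Ioo] at *
    linarith
  have h3 : (k:ℝ) ≤ (⌈x⌉₊ : ℝ) := le_trans h2 (Nat.le_ceil x)
  exact Set.mem_Iic.mpr (by exact_mod_cast h3)

lemma h2_continuous : Continuous h2 :=
  continuous_finsum (fun k => tri_continuous _ _ _) f2_locallyFinite

lemma nat_dist {k m : ℕ} (h : k ≠ m) : (1:ℝ) ≤ |(k:ℝ) - (m:ℝ)| := by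
  rcases lt_or_gt_of_ne h with hl | hl
  · rw [abs_sub_comm, abs_of_nonneg (sub_nonneg.mpr (by exact_mod_cast hl.le))]
    have : (k:ℝ) + 1 ≤ (m:ℝ) := by exact_mod_cast Nat.succ_le.mpr hl
    linarith
  · rw [abs_of_nonneg (sub_nonneg.mpr (by exact_mod_cast hl.le))]
    have : (m:ℝ) + 1 ≤ (k:ℝ) := by exact_mod_cast Nat.succ_le.mpr hl
    linarith

lemma h2_eval {k : ℕ} {x : ℝ} (h : |x - ((k : ℝ) + 3 / 2)| ≤ 1/2) : h2 x = f2 k x := by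
  apply finsum_eq_single
  intro m hm
  apply f2_eq_zero
  have h1 : (1:ℝ) ≤ |(m:ℝ) - (k:ℝ)| := nat_dist hm
  have h2 : |(m:ℝ) - (k:ℝ)| - |x - ((k : ℝ) + 3 / 2)| ≤ |x - ((m : ℝ) + 3 / 2)| := by
    calc |(m:ℝ) - (k:ℝ)| - |x - ((k : ℝ) + 3 / 2)|
        ≤ |((m:ℝ) - (k:ℝ)) - (x - ((k : ℝ) + 3 / 2))| :=
          abs_sub_abs_le_abs_sub _ _
      _ = |x - ((m : ℝ) + 3 / 2)| := by
          rw [show ((m:ℝ) - (k:ℝ)) - (x - ((k : ℝ) + 3 / 2))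
              = -(x - ((m : ℝ) + 3 / 2)) by ring, abs_neg]
  linarith

lemma h2_zero {x : ℝ} (hx : x ≤ 5/4) : h2 x = 0 := by
  have : ∀ k : ℕ, f2 k x = 0 := by
    intro k
    apply f2_eq_zero
    rw [abs_sub_comm, abs_of_nonneg (by
      have : (0:ℝ) ≤ (k:ℝ) := Nat.cast_nonneg k
      linarith)]
    have : (0:ℝ) ≤ (k:ℝ) := Nat.cast_nonneg k
    linarith
  unfold h2
  simp [this]

lemma h2_dyadic {x : ℝ} (hx : IsDyadic x) : IsDyadic (h2 x) := by
  by_cases hz : ∀ k, f2 k x = 0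
  · unfold h2; simp [hz]; exact dy_zero
  · push_neg at hz
    obtain ⟨k, hk⟩ := hz
    have hclose := f2_ne_zero hk
    have : h2 x = f2 k x := h2_eval (by linarith)
    rw [this]
    apply tri_dyadic _ _ _ hx
    · exact ⟨2, 0, by norm_num⟩
    · refine ⟨2 ^ (2 ^ k + 3), 0, ?_⟩
      push_cast
      rw [pow_succ]
      ring
    · exact ⟨2 * k + 3, 1, by push_cast; ring⟩

end St9

namespace St9

lemma poly_growth (p : Polynomial ℕ) (N : ℕ) : ∃ k, N ≤ k ∧ p.eval k ≤ 2 ^ k := by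
  set d := p.natDegree with hd
  set C := ∑ i ∈ Finset.range (d + 1), p.coeff i with hC
  -- p.eval k ≤ C * k ^ d for k ≥ 1
  have hev : ∀ k : ℕ, 1 ≤ k → p.eval k ≤ C * k ^ d := by
    intro k hk
    rw [Polynomial.eval_eq_sum_range, hC, Finset.sum_mul]
    apply Finset.sum_le_sum
    intro i hi
    apply Nat.mul_le_mul_left
    exact Nat.pow_le_pow_right hk (by
      have := Finset.mem_range.mp hi
      omega)
  -- eventually C * k ^ d ≤ 2 ^ k
  have htend := tendsto_pow_const_div_const_pow_of_one_lt d (by norm_num : (1:ℝ) < 2)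
  have hev2 : ∀ᶠ k : ℕ in Filter.atTop, (k:ℝ) ^ d / 2 ^ k < 1 / (C + 1) := by
    apply htend.eventually_lt_const
    positivity
  obtain ⟨k0, hk0⟩ := Filter.eventually_atTop.mp hev2
  refine ⟨max (max N 1) k0, le_trans (le_max_left N 1) (le_max_left _ _), ?_⟩
  set k := max (max N 1) k0 with hk
  have hk1 : 1 ≤ k := le_trans (le_max_right N 1) (le_max_left _ _)
  have hkk0 : k0 ≤ k := le_max_right _ _
  have hlt := hk0 k hkk0
  have hpow : (0:ℝ) < 2 ^ k := by positivity
  have hCk : (C:ℝ) * (k:ℝ) ^ d ≤ 2 ^ k := by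
    rw [div_lt_div_iff₀ hpow (by positivity)] at hlt
    have hkd : (0:ℝ) ≤ (k:ℝ) ^ d := by positivity
    nlinarith [hkd]
  have : (C * k ^ d : ℕ) ≤ 2 ^ k := by
    have := hCk
    push_cast at this ⊢
    exact_mod_cast this
  exact le_trans (hev k hk1) this

lemma nat_add_two_le {k : ℕ} (hk : 2 ≤ k) : k + 2 ≤ 2 ^ k := by
  induction k with
  | zero => omega
  | succ n ih =>
    rcases Nat.lt_or_ge n 2 with h | h
    · interval_cases n <;> simp_all <;> omega
    · have := ih (by omega)
      have h2 : 2 ^ n + 2 ^ n = 2 ^ (n + 1) := by rw [pow_succ]; omega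
      omega

lemma inv_pow_le {a b : ℕ} (h : a ≤ b) : (1:ℝ) / 2 ^ b ≤ 1 / 2 ^ a :=
  one_div_le_one_div_of_le (by positivity) (pow_le_pow_right₀ one_le_two h)

lemma zpow_neg_nat (a : ℕ) : (2:ℝ) ^ (-(a:ℤ)) = 1 / 2 ^ a := by
  rw [zpow_neg, zpow_natCast, one_div]

end St9

theorem statement9 :
    ∃ h : ℝ → ℝ,
      ContinuousOn h (Set.Ici 0) ∧
      (∀ x : ℝ, 0 ≤ x → IsDyadic x → IsDyadic (h x)) ∧
      (∀ p : Polynomial ℕ, ∃ k : ℕ,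
        ∃ x ∈ Set.Icc (0 : ℝ) (2 ^ k), ∃ y ∈ Set.Icc (0 : ℝ) (2 ^ k),
          |x - y| ≤ (2 : ℝ) ^ (-((p.eval k : ℕ) : ℤ)) ∧ 1 < |h x - h y|) ∧
      (∀ q : Polynomial ℕ, ∃ n : ℕ,
        ∃ x ∈ Set.Icc (0 : ℝ) 1, ∃ y ∈ Set.Icc (0 : ℝ) 1,
          |x - y| ≤ (2 : ℝ) ^ (-((q.eval n : ℕ) : ℤ)) ∧ (2 : ℝ) ^ (-(n : ℤ)) < |h x - h y|) := by
  refine ⟨St9.hfun, (St9.h1_continuous.add St9.h2_continuous).continuousOn, ?_, ?_, ?_⟩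
  · intro x _ hx
    exact St9.dy_add (St9.h1_dyadic hx) (St9.h2_dyadic hx)
  · -- extension argument
    intro p
    obtain ⟨k, hk2, hpk⟩ := St9.poly_growth p 2
    have hk2' : (k:ℝ) + 2 ≤ 2 ^ k := by
      have := St9.nat_add_two_le hk2
      exact_mod_cast this
    have hknn : (0:ℝ) ≤ (k:ℝ) := Nat.cast_nonneg k
    have hw4 : (1:ℝ) / 2 ^ (2 ^ k + 2) ≤ 1 / 4 := by
      calc (1:ℝ) / 2 ^ (2 ^ k + 2) ≤ 1 / 2 ^ 2 := St9.inv_pow_le (Nat.le_add_left 2 (2^k))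
        _ = 1 / 4 := by norm_num
    have hwpos : (0:ℝ) < 1 / 2 ^ (2 ^ k + 2) := by positivity
    refine ⟨k, (k:ℝ) + 3/2, ⟨by linarith, by linarith⟩,
      (k:ℝ) + 3/2 + 1 / 2 ^ (2 ^ k + 2), ⟨by linarith, by linarith⟩, ?_, ?_⟩
    · rw [show (k:ℝ) + 3/2 - ((k:ℝ) + 3/2 + 1 / 2 ^ (2 ^ k + 2))
          = -(1 / 2 ^ (2 ^ k + 2)) by ring, abs_neg, abs_of_nonneg (le_of_lt hwpos),
        St9.zpow_neg_nat]
      exact St9.inv_pow_le (by omega)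
    · have hx1 : St9.h1 ((k:ℝ) + 3/2) = 0 := St9.h1_zero (by linarith)
      have hy1 : St9.h1 ((k:ℝ) + 3/2 + 1 / 2 ^ (2 ^ k + 2)) = 0 := St9.h1_zero (by linarith)
      have hx2 : St9.h2 ((k:ℝ) + 3/2) = 2 := by
        rw [St9.h2_eval (k := k) (by
          rw [show (k:ℝ) + 3/2 - ((k:ℝ) + 3/2) = 0 by ring, abs_zero]; norm_num)]
        exact St9.f2_center k
      have hy2 : St9.h2 ((k:ℝ) + 3/2 + 1 / 2 ^ (2 ^ k + 2)) = 0 := by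
        rw [St9.h2_eval (k := k) (by
          rw [show (k:ℝ) + 3/2 + 1 / 2 ^ (2 ^ k + 2) - ((k:ℝ) + 3/2)
              = 1 / 2 ^ (2 ^ k + 2) by ring, abs_of_nonneg (le_of_lt hwpos)]
          linarith)]
        exact St9.f2_edge k
      unfold St9.hfun
      rw [hx1, hx2, hy1, hy2]
      norm_num
  · -- precision argument
    intro q
    obtain ⟨n, _, hqn⟩ := St9.poly_growth q 0
    have hn2 : n ≤ 2 ^ n := (Nat.lt_two_pow_self (n := n)).le
    have hww : (1:ℝ) / 2 ^ (2 ^ n + 2) ≤ 1 / 2 ^ (n + 2) := St9.inv_pow_le (by omega)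
    have hwpos : (0:ℝ) < 1 / 2 ^ (2 ^ n + 2) := by positivity
    have hppos : (0:ℝ) < 2 ^ (n + 2) := by positivity
    have e4 : (4:ℝ) / 2 ^ (n + 2) = 1 / 2 ^ n := by rw [pow_succ, pow_succ]; ring
    have e2 : (2:ℝ) / 2 ^ (n + 2) = 1 / 2 ^ (n + 1) := by rw [pow_succ]; ring
    have hone : (1:ℝ) / 2 ^ n ≤ 1 := by
      rw [div_le_one (by positivity)]
      exact one_le_pow₀ one_le_two
    have hchain : (3:ℝ) / 2 ^ (n + 2) + 1 / 2 ^ (2 ^ n + 2) ≤ 1 / 2 ^ n := by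
      calc (3:ℝ) / 2 ^ (n + 2) + 1 / 2 ^ (2 ^ n + 2)
          ≤ 3 / 2 ^ (n + 2) + 1 / 2 ^ (n + 2) := by linarith
        _ = 4 / 2 ^ (n + 2) := by ring
        _ = 1 / 2 ^ n := e4
    have hxpos : (0:ℝ) < 3 / 2 ^ (n + 2) := by positivity
    have hx34 : (3:ℝ) / 2 ^ (n + 2) ≤ 3 / 4 := by
      apply div_le_div_of_nonneg_left (by norm_num) (by norm_num)
      calc (4:ℝ) = 2 ^ 2 := by norm_num
        _ ≤ 2 ^ (n + 2) := pow_le_pow_right₀ one_le_two (Nat.le_add_left 2 n)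
    have hlow : (1:ℝ) / 2 ^ (n + 1) ≤ 3 / 2 ^ (n + 2) := by
      rw [← e2]
      exact (div_le_div_iff_of_pos_right hppos).mpr (by norm_num)
    have hup : (3:ℝ) / 2 ^ (n + 2) ≤ 1 / 2 ^ n := by
      rw [← e4]
      exact (div_le_div_iff_of_pos_right hppos).mpr (by norm_num)
    refine ⟨n, 3 / 2 ^ (n + 2), ⟨le_of_lt hxpos, by linarith⟩,
      3 / 2 ^ (n + 2) + 1 / 2 ^ (2 ^ n + 2), ⟨by linarith, by linarith⟩, ?_, ?_⟩
    · rw [show (3:ℝ) / 2 ^ (n + 2) - (3 / 2 ^ (n + 2) + 1 / 2 ^ (2 ^ n + 2))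
          = -(1 / 2 ^ (2 ^ n + 2)) by ring, abs_neg, abs_of_nonneg (le_of_lt hwpos),
        St9.zpow_neg_nat]
      exact St9.inv_pow_le (by omega)
    · have hx1 : St9.h1 (3 / 2 ^ (n + 2)) = St9.f1 n (3 / 2 ^ (n + 2)) :=
        St9.h1_eval hlow hup
      have hy1 : St9.h1 (3 / 2 ^ (n + 2) + 1 / 2 ^ (2 ^ n + 2))
          = St9.f1 n (3 / 2 ^ (n + 2) + 1 / 2 ^ (2 ^ n + 2)) :=
        St9.h1_eval (by linarith) hchain
      have hx2 : St9.h2 (3 / 2 ^ (n + 2)) = 0 := St9.h2_zero (by linarith)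
      have hy2 : St9.h2 (3 / 2 ^ (n + 2) + 1 / 2 ^ (2 ^ n + 2)) = 0 :=
        St9.h2_zero (by linarith)
      unfold St9.hfun
      rw [hx1, hx2, hy1, hy2, St9.f1_center n, St9.f1_edge n, St9.zpow_neg_nat]
      rw [show (2:ℝ) / 2 ^ n + 0 - (0 + 0) = 2 / 2 ^ n by ring,
        abs_of_nonneg (by positivity)]
      have : (0:ℝ) < 1 / 2 ^ n := by positivity
      calc (1:ℝ) / 2 ^ n < 2 * (1 / 2 ^ n) := by linarith
        _ = 2 / 2 ^ n := by ring
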